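/- arXiv:1408.4984 — 4 statements merged into one kernel-verified Lean document; each statement's English description precedes it below -/
import Mathlib

section
/- Given a pca A, the set A equipped with the application (a,b) ↦ a·b defined inductively by the four clauses (constant function, S-combinator on coded triples, currying of parameters, and application in A, as in the proof of the strictness theorem) is a strict pca, with k′ = [1̄] and s′ = [3̄,[2̄]]. -/
structure PAS (A : Type) where
  app : A → A → Part A

namespace PAS
variable {A : Type}

def app2 (S : PAS A) (a b c : A) : Part A := (S.app a b).bind fun x => S.app x c

def app3 (S : PAS A) (a b c d : A) : Part A := (S.app2 a b c).bind fun x => S.app x d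

def appList (S : PAS A) (a : A) (l : List A) : Part A :=
  l.foldl (fun x b => x.bind fun y => S.app y b) (Part.some a)

end PAS

/-- A partial combinatory algebra: `s a b` is defined, `k a b = a`, and
`s a b c ≳ a c (b c)` (if the right side is defined, so is the left, with equal value). -/
structure PCA (A : Type) where
  pas : PAS A
  k : A
  s : A
  s_def : ∀ a b : A, (pas.app2 s a b).Dom
  k_spec : ∀ a b : A, pas.app2 k a b = Part.some a
  s_spec : ∀ a b c v : A,
    v ∈ ((pas.app a c).bind fun x => (pas.app b c).bind fun y => pas.app x y) →
    v ∈ pas.app3 s a b c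

/-- Applicative morphism of pcas (Longley). -/
structure AppMorphism {A B : Type} (SA : PCA A) (SB : PCA B) where
  rel : A → B → Prop
  total : ∀ a : A, ∃ b : B, rel a b
  r : B
  realizes : ∀ a a' c : A, c ∈ SA.pas.app a a' → ∀ b b' : B, rel a b → rel a' b' →
    (SB.pas.app2 r b b').Dom ∧ ∀ d ∈ SB.pas.app2 r b b', rel c d

/-- The preorder `γ ≼ δ` on applicative morphisms (phrased on the underlying relations). -/
def preceq {A B : Type} (SB : PAS B) (R R' : A → B → Prop) : Prop :=
  ∃ t : B, ∀ a b, R a b → (SB.app t b).Dom ∧ ∀ c ∈ SB.app t b, R' a c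

def releq {A B : Type} (SB : PAS B) (R R' : A → B → Prop) : Prop :=
  preceq SB R R' ∧ preceq SB R' R

/-- Relational composition (composition of applicative morphisms). -/
def relComp {A B C : Type} (R : A → B → Prop) (T : B → C → Prop) : A → C → Prop :=
  fun a c => ∃ b, R a b ∧ T b c

/-- Isomorphism of pcas in the preorder-enriched category PCA. -/
def Isomorphic {A B : Type} (SA : PCA A) (SB : PCA B) : Prop :=
  ∃ (γ : AppMorphism SA SB) (δ : AppMorphism SB SA),
    releq SA.pas (relComp γ.rel δ.rel) (fun a a' => a = a') ∧
    releq SB.pas (relComp δ.rel γ.rel) (fun b b' => b = b')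

/-- A decider for an applicative morphism, relative to chosen booleans. -/
def DecidesRel {A B : Type} (SB : PCA B) (R : A → B → Prop) (TA FA : A) (TB FB : B) : Prop :=
  ∃ d : B, (∀ b, R TA b → SB.pas.app d b = Part.some TB) ∧
    (∀ b, R FA b → SB.pas.app d b = Part.some FB)

/-- A choice of boolean combinators in a pca. -/
structure Booleans {A : Type} (S : PCA A) where
  Tb : A
  Fb : A
  T_spec : ∀ a b : A, S.pas.app2 Tb a b = Part.some a
  F_spec : ∀ a b : A, S.pas.app2 Fb a b = Part.some b

/-- Data needed to build the oracle extension `A[f]`: a pairing combinator,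
booleans, and a coding of tuples. -/
structure OracleData {A : Type} (S : PCA A) where
  pair : A
  Tb : A
  Fb : A
  tup : List A → A
  pair_def : ∀ a b : A, (S.pas.app2 pair a b).Dom
  T_spec : ∀ a b : A, S.pas.app2 Tb a b = Part.some a
  F_spec : ∀ a b : A, S.pas.app2 Fb a b = Part.some b

/-- `u` is an `f`-dialogue between `a` and `b`:
for each `i`, `a ([b] * u^{<i}) = pair F vᵢ` with `f vᵢ = uᵢ`. -/
def IsDialogue {A : Type} (S : PCA A) (D : OracleData S) (f : A → A → Prop)
    (a b : A) (u : List A) : Prop :=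
  ∀ i : ℕ, ∀ h : i < u.length, ∃ v x : A,
    x ∈ S.pas.app a (D.tup (b :: u.take i)) ∧
    x ∈ S.pas.app2 D.pair D.Fb v ∧ f v (u.get ⟨i, h⟩)

/-- The application of the oracle extension `A[f]`: `a ·ᶠ b = c` iff there is a
halting `f`-dialogue, with `a ([b] * u) = pair T c`. -/
def OrApp {A : Type} (S : PCA A) (D : OracleData S) (f : A → A → Prop)
    (a b c : A) : Prop :=
  ∃ u : List A, IsDialogue S D f a b u ∧
    ∃ x : A, x ∈ S.pas.app a (D.tup (b :: u)) ∧ x ∈ S.pas.app2 D.pair D.Tb c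

/-- Index sets relative to an applicative morphism: `I₁^γ(g)`. -/
def I1gamma {A B : Type} (SB : PCA B) (R : A → B → Prop) (g : A → A) : Set B :=
  {b | ∀ a x, R a x → (SB.pas.app b x).Dom ∧ ∀ y ∈ SB.pas.app b x, R (g a) y}

/-- `f ∈ PR_γ`. -/
def PRgamma {A B : Type} (SB : PCA B) (R : A → B → Prop) (f : A → A → Prop) : Prop :=
  ∃ b : B, ∀ a c, f a c → ∀ x, R a x → (SB.pas.app b x).Dom ∧ ∀ y ∈ SB.pas.app b x, R c y

/-- `F ∈ E_γ`: `F` is an effective operation relative to `γ`. -/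
def Egamma {A B : Type} (SB : PCA B) (R : A → B → Prop) (F : (A → A) → Part A) : Prop :=
  ∃ e : B, ∀ g : A → A, (I1gamma SB R g).Nonempty → (F g).Dom →
    ∀ b ∈ I1gamma SB R g, (SB.pas.app e b).Dom ∧
      ∀ y ∈ SB.pas.app e b, ∀ c ∈ F g, R c y

/-- The stagewise family of oracles used to build `A[F]`:
`f₀ = ∅`; `f_{α+1}(a) = F g` whenever `g` is total with index `a` in `A[f_α]`;
unions at limits. -/
noncomputable def stage {A : Type} (S : PCA A) (D : OracleData S)
    (F : (A → A) → Part A) (α : Ordinal.{0}) : A → A → Prop :=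
  Ordinal.limitRecOn (motive := fun _ => A → A → Prop) α
    (fun _ _ => False)
    (fun _ prev => fun a b => ∃ g : A → A, b ∈ F g ∧ ∀ x, OrApp S D prev a x (g x))
    (fun o _ ih => fun a b => ∃ β : Ordinal.{0}, ∃ h : β < o, ih β h a b)

/-- The union `f = ⋃_α f_α` of the stagewise oracles; `A[F] := A[f]`. -/
noncomputable def fullOracle {A : Type} (S : PCA A) (D : OracleData S)
    (F : (A → A) → Part A) : A → A → Prop :=
  fun a b => ∃ α : Ordinal.{0}, stage S D F α a b

/-- `P → Q` for subsets of a partial applicative structure. -/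
def arrowSet {A : Type} (S : PAS A) (P Q : Set A) : Set A :=
  {a | ∀ b ∈ P, (S.app a b).Dom ∧ ∀ c ∈ S.app a b, c ∈ Q}


/-- Strict combinatory completeness witnessed by designated `k`, `s`:
`s a b` defined, `k a b = a`, and `s a b c ≃ a c (b c)` (both sides defined
simultaneously, with equal values). -/
def IsStrictWith {A : Type} (P : PAS A) (k s : A) : Prop :=
  (∀ a b : A, (P.app2 s a b).Dom) ∧
  (∀ a b : A, P.app2 k a b = Part.some a) ∧
  (∀ a b c : A, P.app3 s a b c =
    ((P.app a c).bind fun x => (P.app b c).bind fun y => P.app x y))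

/-- The inductively defined application of the strictness theorem:
constant function (tag `t1`), S-combinator on coded triples (tag `t2`),
currying of parameters (tag `t3`), and application in `A` (tag `t4`). -/
inductive NewApp {A : Type} (S : PAS A) (code : List A → A) (t1 t2 t3 t4 : A) :
    A → A → A → Prop
  | k1 (a : A) : NewApp S code t1 t2 t3 t4 (code [t1]) a (code [t1, a])
  | k2 (a b : A) : NewApp S code t1 t2 t3 t4 (code [t1, a]) b a
  | scomb (a b c x y z : A)
      (h1 : NewApp S code t1 t2 t3 t4 a c x)
      (h2 : NewApp S code t1 t2 t3 t4 b c y)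
      (h3 : NewApp S code t1 t2 t3 t4 x y z) :
      NewApp S code t1 t2 t3 t4 (code [t2]) (code [a, b, c]) z
  | c1 (e a : A) : NewApp S code t1 t2 t3 t4 (code [t3, e]) a (code [t3, e, a])
  | c2 (e a b : A) : NewApp S code t1 t2 t3 t4 (code [t3, e, a]) b (code [t3, e, a, b])
  | c3 (e a b c z : A) (h : NewApp S code t1 t2 t3 t4 e (code [a, b, c]) z) :
      NewApp S code t1 t2 t3 t4 (code [t3, e, a, b]) c z
  | a1 (a : A) : NewApp S code t1 t2 t3 t4 (code [t4]) a (code [t4, a])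
  | a2 (a b z : A) (h : z ∈ S.app a b) : NewApp S code t1 t2 t3 t4 (code [t4, a]) b z



section NewAppAux

variable {A : Type} (S : PAS A) (code : List A → A) (t1 t2 t3 t4 : A)

lemma newApp_inv : ∀ {u b z : A}, NewApp S code t1 t2 t3 t4 u b z →
    (u = code [t1] ∧ z = code [t1, b]) ∨
    (∃ a, u = code [t1, a] ∧ z = a) ∨
    (∃ a' b' c' x y, u = code [t2] ∧ b = code [a', b', c'] ∧
      NewApp S code t1 t2 t3 t4 a' c' x ∧ NewApp S code t1 t2 t3 t4 b' c' y ∧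
      NewApp S code t1 t2 t3 t4 x y z) ∨
    (∃ e, u = code [t3, e] ∧ z = code [t3, e, b]) ∨
    (∃ e a, u = code [t3, e, a] ∧ z = code [t3, e, a, b]) ∨
    (∃ e a' b', u = code [t3, e, a', b'] ∧
      NewApp S code t1 t2 t3 t4 e (code [a', b', b]) z) ∨
    (u = code [t4] ∧ z = code [t4, b]) ∨
    (∃ a, u = code [t4, a] ∧ z ∈ S.app a b) := by
  intro u b z h
  cases h with
  | k1 => exact Or.inl ⟨rfl, rfl⟩
  | k2 => exact Or.inr (Or.inl ⟨_, rfl, rfl⟩)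
  | scomb =>
      rename_i h1 h2 h3
      exact Or.inr (Or.inr (Or.inl ⟨_, _, _, _, _, rfl, rfl, h1, h2, h3⟩))
  | c1 => exact Or.inr (Or.inr (Or.inr (Or.inl ⟨_, rfl, rfl⟩)))
  | c2 => exact Or.inr (Or.inr (Or.inr (Or.inr (Or.inl ⟨_, _, rfl, rfl⟩))))
  | c3 =>
      rename_i h0
      exact Or.inr (Or.inr (Or.inr (Or.inr (Or.inr (Or.inl ⟨_, _, _, rfl, h0⟩)))))
  | a1 => exact Or.inr (Or.inr (Or.inr (Or.inr (Or.inr (Or.inr (Or.inl ⟨rfl, rfl⟩))))))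
  | a2 =>
      rename_i h0
      exact Or.inr (Or.inr (Or.inr (Or.inr (Or.inr (Or.inr (Or.inr ⟨_, rfl, h0⟩))))))

lemma newApp_det (hinj : Function.Injective code)
    (h12 : t1 ≠ t2) (h13 : t1 ≠ t3) (h14 : t1 ≠ t4)
    (h23 : t2 ≠ t3) (h24 : t2 ≠ t4) (h34 : t3 ≠ t4) :
    ∀ {a b z : A}, NewApp S code t1 t2 t3 t4 a b z →
    ∀ {z' : A}, NewApp S code t1 t2 t3 t4 a b z' → z = z' := by
  intro a b z h
  induction h with
  | k1 a0 =>
    intro z' h'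
    rcases newApp_inv S code t1 t2 t3 t4 h' with ⟨h1, h2⟩ | ⟨a', h1, h2⟩ |
      ⟨a', b', c', x', y', h1, h2, h3, h4, h5⟩ | ⟨e', h1, h2⟩ | ⟨e', a', h1, h2⟩ |
      ⟨e', a', b', h1, h2⟩ | ⟨h1, h2⟩ | ⟨a', h1, h2⟩
    · exact h2.symm
    · exact absurd (hinj h1) (by simp [h12, h13, h14, h23, h24, h34, Ne.symm h12, Ne.symm h13, Ne.symm h14, Ne.symm h23, Ne.symm h24, Ne.symm h34])
    · exact absurd (hinj h1) (by simp [h12, h13, h14, h23, h24, h34, Ne.symm h12, Ne.symm h13, Ne.symm h14, Ne.symm h23, Ne.symm h24, Ne.symm h34])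
    · exact absurd (hinj h1) (by simp [h12, h13, h14, h23, h24, h34, Ne.symm h12, Ne.symm h13, Ne.symm h14, Ne.symm h23, Ne.symm h24, Ne.symm h34])
    · exact absurd (hinj h1) (by simp [h12, h13, h14, h23, h24, h34, Ne.symm h12, Ne.symm h13, Ne.symm h14, Ne.symm h23, Ne.symm h24, Ne.symm h34])
    · exact absurd (hinj h1) (by simp [h12, h13, h14, h23, h24, h34, Ne.symm h12, Ne.symm h13, Ne.symm h14, Ne.symm h23, Ne.symm h24, Ne.symm h34])
    · exact absurd (hinj h1) (by simp [h12, h13, h14, h23, h24, h34, Ne.symm h12, Ne.symm h13, Ne.symm h14, Ne.symm h23, Ne.symm h24, Ne.symm h34])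
    · exact absurd (hinj h1) (by simp [h12, h13, h14, h23, h24, h34, Ne.symm h12, Ne.symm h13, Ne.symm h14, Ne.symm h23, Ne.symm h24, Ne.symm h34])
  | k2 a0 b0 =>
    intro z' h'
    rcases newApp_inv S code t1 t2 t3 t4 h' with ⟨h1, h2⟩ | ⟨a', h1, h2⟩ |
      ⟨a', b', c', x', y', h1, h2, h3, h4, h5⟩ | ⟨e', h1, h2⟩ | ⟨e', a', h1, h2⟩ |
      ⟨e', a', b', h1, h2⟩ | ⟨h1, h2⟩ | ⟨a', h1, h2⟩
    · exact absurd (hinj h1) (by simp [h12, h13, h14, h23, h24, h34, Ne.symm h12, Ne.symm h13, Ne.symm h14, Ne.symm h23, Ne.symm h24, Ne.symm h34])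
    · have h3 : a0 = a' := by simpa using hinj h1
      subst h3; exact h2.symm
    · exact absurd (hinj h1) (by simp [h12, h13, h14, h23, h24, h34, Ne.symm h12, Ne.symm h13, Ne.symm h14, Ne.symm h23, Ne.symm h24, Ne.symm h34])
    · exact absurd (hinj h1) (by simp [h12, h13, h14, h23, h24, h34, Ne.symm h12, Ne.symm h13, Ne.symm h14, Ne.symm h23, Ne.symm h24, Ne.symm h34])
    · exact absurd (hinj h1) (by simp [h12, h13, h14, h23, h24, h34, Ne.symm h12, Ne.symm h13, Ne.symm h14, Ne.symm h23, Ne.symm h24, Ne.symm h34])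
    · exact absurd (hinj h1) (by simp [h12, h13, h14, h23, h24, h34, Ne.symm h12, Ne.symm h13, Ne.symm h14, Ne.symm h23, Ne.symm h24, Ne.symm h34])
    · exact absurd (hinj h1) (by simp [h12, h13, h14, h23, h24, h34, Ne.symm h12, Ne.symm h13, Ne.symm h14, Ne.symm h23, Ne.symm h24, Ne.symm h34])
    · exact absurd (hinj h1) (by simp [h12, h13, h14, h23, h24, h34, Ne.symm h12, Ne.symm h13, Ne.symm h14, Ne.symm h23, Ne.symm h24, Ne.symm h34])
  | scomb a0 b0 c0 x0 y0 z0 hx hy hz ih1 ih2 ih3 =>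
    intro z' h'
    rcases newApp_inv S code t1 t2 t3 t4 h' with ⟨h1, h2⟩ | ⟨a', h1, h2⟩ |
      ⟨a', b', c', x', y', h1, h2, h3, h4, h5⟩ | ⟨e', h1, h2⟩ | ⟨e', a', h1, h2⟩ |
      ⟨e', a', b', h1, h2⟩ | ⟨h1, h2⟩ | ⟨a', h1, h2⟩
    · exact absurd (hinj h1) (by simp [h12, h13, h14, h23, h24, h34, Ne.symm h12, Ne.symm h13, Ne.symm h14, Ne.symm h23, Ne.symm h24, Ne.symm h34])
    · exact absurd (hinj h1) (by simp [h12, h13, h14, h23, h24, h34, Ne.symm h12, Ne.symm h13, Ne.symm h14, Ne.symm h23, Ne.symm h24, Ne.symm h34])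
    · have h6 : a0 = a' ∧ b0 = b' ∧ c0 = c' := by simpa using hinj h2
      obtain ⟨rfl, rfl, rfl⟩ := h6
      cases ih1 h3; cases ih2 h4
      exact ih3 h5
    · exact absurd (hinj h1) (by simp [h12, h13, h14, h23, h24, h34, Ne.symm h12, Ne.symm h13, Ne.symm h14, Ne.symm h23, Ne.symm h24, Ne.symm h34])
    · exact absurd (hinj h1) (by simp [h12, h13, h14, h23, h24, h34, Ne.symm h12, Ne.symm h13, Ne.symm h14, Ne.symm h23, Ne.symm h24, Ne.symm h34])
    · exact absurd (hinj h1) (by simp [h12, h13, h14, h23, h24, h34, Ne.symm h12, Ne.symm h13, Ne.symm h14, Ne.symm h23, Ne.symm h24, Ne.symm h34])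
    · exact absurd (hinj h1) (by simp [h12, h13, h14, h23, h24, h34, Ne.symm h12, Ne.symm h13, Ne.symm h14, Ne.symm h23, Ne.symm h24, Ne.symm h34])
    · exact absurd (hinj h1) (by simp [h12, h13, h14, h23, h24, h34, Ne.symm h12, Ne.symm h13, Ne.symm h14, Ne.symm h23, Ne.symm h24, Ne.symm h34])
  | c1 e0 a0 =>
    intro z' h'
    rcases newApp_inv S code t1 t2 t3 t4 h' with ⟨h1, h2⟩ | ⟨a', h1, h2⟩ |
      ⟨a', b', c', x', y', h1, h2, h3, h4, h5⟩ | ⟨e', h1, h2⟩ | ⟨e', a', h1, h2⟩ |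
      ⟨e', a', b', h1, h2⟩ | ⟨h1, h2⟩ | ⟨a', h1, h2⟩
    · exact absurd (hinj h1) (by simp [h12, h13, h14, h23, h24, h34, Ne.symm h12, Ne.symm h13, Ne.symm h14, Ne.symm h23, Ne.symm h24, Ne.symm h34])
    · exact absurd (hinj h1) (by simp [h12, h13, h14, h23, h24, h34, Ne.symm h12, Ne.symm h13, Ne.symm h14, Ne.symm h23, Ne.symm h24, Ne.symm h34])
    · exact absurd (hinj h1) (by simp [h12, h13, h14, h23, h24, h34, Ne.symm h12, Ne.symm h13, Ne.symm h14, Ne.symm h23, Ne.symm h24, Ne.symm h34])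
    · have h3 : e0 = e' := by simpa using hinj h1
      subst h3; exact h2.symm
    · exact absurd (hinj h1) (by simp [h12, h13, h14, h23, h24, h34, Ne.symm h12, Ne.symm h13, Ne.symm h14, Ne.symm h23, Ne.symm h24, Ne.symm h34])
    · exact absurd (hinj h1) (by simp [h12, h13, h14, h23, h24, h34, Ne.symm h12, Ne.symm h13, Ne.symm h14, Ne.symm h23, Ne.symm h24, Ne.symm h34])
    · exact absurd (hinj h1) (by simp [h12, h13, h14, h23, h24, h34, Ne.symm h12, Ne.symm h13, Ne.symm h14, Ne.symm h23, Ne.symm h24, Ne.symm h34])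
    · exact absurd (hinj h1) (by simp [h12, h13, h14, h23, h24, h34, Ne.symm h12, Ne.symm h13, Ne.symm h14, Ne.symm h23, Ne.symm h24, Ne.symm h34])
  | c2 e0 a0 b0 =>
    intro z' h'
    rcases newApp_inv S code t1 t2 t3 t4 h' with ⟨h1, h2⟩ | ⟨a', h1, h2⟩ |
      ⟨a', b', c', x', y', h1, h2, h3, h4, h5⟩ | ⟨e', h1, h2⟩ | ⟨e', a', h1, h2⟩ |
      ⟨e', a', b', h1, h2⟩ | ⟨h1, h2⟩ | ⟨a', h1, h2⟩
    · exact absurd (hinj h1) (by simp [h12, h13, h14, h23, h24, h34, Ne.symm h12, Ne.symm h13, Ne.symm h14, Ne.symm h23, Ne.symm h24, Ne.symm h34])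
    · exact absurd (hinj h1) (by simp [h12, h13, h14, h23, h24, h34, Ne.symm h12, Ne.symm h13, Ne.symm h14, Ne.symm h23, Ne.symm h24, Ne.symm h34])
    · exact absurd (hinj h1) (by simp [h12, h13, h14, h23, h24, h34, Ne.symm h12, Ne.symm h13, Ne.symm h14, Ne.symm h23, Ne.symm h24, Ne.symm h34])
    · exact absurd (hinj h1) (by simp [h12, h13, h14, h23, h24, h34, Ne.symm h12, Ne.symm h13, Ne.symm h14, Ne.symm h23, Ne.symm h24, Ne.symm h34])
    · have h3 : e0 = e' ∧ a0 = a' := by simpa using hinj h1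
      obtain ⟨rfl, rfl⟩ := h3; exact h2.symm
    · exact absurd (hinj h1) (by simp [h12, h13, h14, h23, h24, h34, Ne.symm h12, Ne.symm h13, Ne.symm h14, Ne.symm h23, Ne.symm h24, Ne.symm h34])
    · exact absurd (hinj h1) (by simp [h12, h13, h14, h23, h24, h34, Ne.symm h12, Ne.symm h13, Ne.symm h14, Ne.symm h23, Ne.symm h24, Ne.symm h34])
    · exact absurd (hinj h1) (by simp [h12, h13, h14, h23, h24, h34, Ne.symm h12, Ne.symm h13, Ne.symm h14, Ne.symm h23, Ne.symm h24, Ne.symm h34])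
  | c3 e0 a0 b0 c0 z0 h0 ih =>
    intro z' h'
    rcases newApp_inv S code t1 t2 t3 t4 h' with ⟨h1, h2⟩ | ⟨a', h1, h2⟩ |
      ⟨a', b', c', x', y', h1, h2, h3, h4, h5⟩ | ⟨e', h1, h2⟩ | ⟨e', a', h1, h2⟩ |
      ⟨e', a', b', h1, h2⟩ | ⟨h1, h2⟩ | ⟨a', h1, h2⟩
    · exact absurd (hinj h1) (by simp [h12, h13, h14, h23, h24, h34, Ne.symm h12, Ne.symm h13, Ne.symm h14, Ne.symm h23, Ne.symm h24, Ne.symm h34])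
    · exact absurd (hinj h1) (by simp [h12, h13, h14, h23, h24, h34, Ne.symm h12, Ne.symm h13, Ne.symm h14, Ne.symm h23, Ne.symm h24, Ne.symm h34])
    · exact absurd (hinj h1) (by simp [h12, h13, h14, h23, h24, h34, Ne.symm h12, Ne.symm h13, Ne.symm h14, Ne.symm h23, Ne.symm h24, Ne.symm h34])
    · exact absurd (hinj h1) (by simp [h12, h13, h14, h23, h24, h34, Ne.symm h12, Ne.symm h13, Ne.symm h14, Ne.symm h23, Ne.symm h24, Ne.symm h34])
    · exact absurd (hinj h1) (by simp [h12, h13, h14, h23, h24, h34, Ne.symm h12, Ne.symm h13, Ne.symm h14, Ne.symm h23, Ne.symm h24, Ne.symm h34])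
    · have h3 : e0 = e' ∧ a0 = a' ∧ b0 = b' := by simpa using hinj h1
      obtain ⟨rfl, rfl, rfl⟩ := h3; exact ih h2
    · exact absurd (hinj h1) (by simp [h12, h13, h14, h23, h24, h34, Ne.symm h12, Ne.symm h13, Ne.symm h14, Ne.symm h23, Ne.symm h24, Ne.symm h34])
    · exact absurd (hinj h1) (by simp [h12, h13, h14, h23, h24, h34, Ne.symm h12, Ne.symm h13, Ne.symm h14, Ne.symm h23, Ne.symm h24, Ne.symm h34])
  | a1 a0 =>
    intro z' h'
    rcases newApp_inv S code t1 t2 t3 t4 h' with ⟨h1, h2⟩ | ⟨a', h1, h2⟩ |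
      ⟨a', b', c', x', y', h1, h2, h3, h4, h5⟩ | ⟨e', h1, h2⟩ | ⟨e', a', h1, h2⟩ |
      ⟨e', a', b', h1, h2⟩ | ⟨h1, h2⟩ | ⟨a', h1, h2⟩
    · exact absurd (hinj h1) (by simp [h12, h13, h14, h23, h24, h34, Ne.symm h12, Ne.symm h13, Ne.symm h14, Ne.symm h23, Ne.symm h24, Ne.symm h34])
    · exact absurd (hinj h1) (by simp [h12, h13, h14, h23, h24, h34, Ne.symm h12, Ne.symm h13, Ne.symm h14, Ne.symm h23, Ne.symm h24, Ne.symm h34])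
    · exact absurd (hinj h1) (by simp [h12, h13, h14, h23, h24, h34, Ne.symm h12, Ne.symm h13, Ne.symm h14, Ne.symm h23, Ne.symm h24, Ne.symm h34])
    · exact absurd (hinj h1) (by simp [h12, h13, h14, h23, h24, h34, Ne.symm h12, Ne.symm h13, Ne.symm h14, Ne.symm h23, Ne.symm h24, Ne.symm h34])
    · exact absurd (hinj h1) (by simp [h12, h13, h14, h23, h24, h34, Ne.symm h12, Ne.symm h13, Ne.symm h14, Ne.symm h23, Ne.symm h24, Ne.symm h34])
    · exact absurd (hinj h1) (by simp [h12, h13, h14, h23, h24, h34, Ne.symm h12, Ne.symm h13, Ne.symm h14, Ne.symm h23, Ne.symm h24, Ne.symm h34])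
    · exact h2.symm
    · exact absurd (hinj h1) (by simp [h12, h13, h14, h23, h24, h34, Ne.symm h12, Ne.symm h13, Ne.symm h14, Ne.symm h23, Ne.symm h24, Ne.symm h34])
  | a2 a0 b0 z0 hmem =>
    intro z' h'
    rcases newApp_inv S code t1 t2 t3 t4 h' with ⟨h1, h2⟩ | ⟨a', h1, h2⟩ |
      ⟨a', b', c', x', y', h1, h2, h3, h4, h5⟩ | ⟨e', h1, h2⟩ | ⟨e', a', h1, h2⟩ |
      ⟨e', a', b', h1, h2⟩ | ⟨h1, h2⟩ | ⟨a', h1, h2⟩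
    · exact absurd (hinj h1) (by simp [h12, h13, h14, h23, h24, h34, Ne.symm h12, Ne.symm h13, Ne.symm h14, Ne.symm h23, Ne.symm h24, Ne.symm h34])
    · exact absurd (hinj h1) (by simp [h12, h13, h14, h23, h24, h34, Ne.symm h12, Ne.symm h13, Ne.symm h14, Ne.symm h23, Ne.symm h24, Ne.symm h34])
    · exact absurd (hinj h1) (by simp [h12, h13, h14, h23, h24, h34, Ne.symm h12, Ne.symm h13, Ne.symm h14, Ne.symm h23, Ne.symm h24, Ne.symm h34])
    · exact absurd (hinj h1) (by simp [h12, h13, h14, h23, h24, h34, Ne.symm h12, Ne.symm h13, Ne.symm h14, Ne.symm h23, Ne.symm h24, Ne.symm h34])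
    · exact absurd (hinj h1) (by simp [h12, h13, h14, h23, h24, h34, Ne.symm h12, Ne.symm h13, Ne.symm h14, Ne.symm h23, Ne.symm h24, Ne.symm h34])
    · exact absurd (hinj h1) (by simp [h12, h13, h14, h23, h24, h34, Ne.symm h12, Ne.symm h13, Ne.symm h14, Ne.symm h23, Ne.symm h24, Ne.symm h34])
    · exact absurd (hinj h1) (by simp [h12, h13, h14, h23, h24, h34, Ne.symm h12, Ne.symm h13, Ne.symm h14, Ne.symm h23, Ne.symm h24, Ne.symm h34])
    · have h3 : a0 = a' := by simpa using hinj h1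
      subst h3; exact Part.mem_unique hmem h2

end NewAppAux

/-- the inductively defined application (constant function,
S-combinator on coded triples, currying, and application in `A`) is a strict
pca with `k' = [1̄]` and `s' = [3̄,[2̄]]`. -/
theorem newApp_strict_pca {A : Type} (SA : PCA A) (code : List A → A)
    (hinj : Function.Injective code) (t1 t2 t3 t4 : A)
    (h12 : t1 ≠ t2) (h13 : t1 ≠ t3) (h14 : t1 ≠ t4)
    (h23 : t2 ≠ t3) (h24 : t2 ≠ t4) (h34 : t3 ≠ t4) :
    ∃ SB : PAS A,
      (∀ a b z : A, z ∈ SB.app a b ↔ NewApp SA.pas code t1 t2 t3 t4 a b z) ∧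
      IsStrictWith SB (code [t1]) (code [t3, code [t2]]) := by
  classical
  have det : ∀ {a b z : A}, NewApp SA.pas code t1 t2 t3 t4 a b z →
      ∀ {z' : A}, NewApp SA.pas code t1 t2 t3 t4 a b z' → z = z' :=
    newApp_det SA.pas code t1 t2 t3 t4 hinj h12 h13 h14 h23 h24 h34
  set N := NewApp SA.pas code t1 t2 t3 t4 with hNdef
  let SB : PAS A := ⟨fun a b => ⟨∃ z, N a b z, fun h => h.choose⟩⟩
  have memiff : ∀ a b z : A, z ∈ SB.app a b ↔ N a b z := by
    intro a b z
    constructor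
    · rintro ⟨h, rfl⟩; exact h.choose_spec
    · intro hz; exact ⟨⟨z, hz⟩, det (Exists.choose_spec (⟨z, hz⟩ : ∃ w, N a b w)) hz⟩
  have eqsome : ∀ a b z : A, N a b z → SB.app a b = Part.some z := fun a b z h =>
    Part.eq_some_iff.2 ((memiff a b z).2 h)
  refine ⟨SB, memiff, ?_, ?_, ?_⟩
  · intro a b
    rw [PAS.app2, eqsome _ _ _ (NewApp.c1 (code [t2]) a), Part.bind_some]
    exact ⟨_, NewApp.c2 (code [t2]) a b⟩
  · intro a b
    rw [PAS.app2, eqsome _ _ _ (NewApp.k1 a), Part.bind_some]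
    exact eqsome _ _ _ (NewApp.k2 a b)
  · intro a b c
    rw [PAS.app3, PAS.app2, eqsome _ _ _ (NewApp.c1 (code [t2]) a), Part.bind_some,
      eqsome _ _ _ (NewApp.c2 (code [t2]) a b), Part.bind_some]
    ext z
    simp only [memiff, Part.mem_bind_iff]
    constructor
    · intro hz
      rcases newApp_inv SA.pas code t1 t2 t3 t4 hz with ⟨h1, h2⟩ | ⟨a', h1, h2⟩ |
          ⟨a', b', c', x', y', h1, h2, h3, h4, h5⟩ | ⟨e', h1, h2⟩ | ⟨e', a', h1, h2⟩ |
          ⟨e', a', b', h1, h2⟩ | ⟨h1, h2⟩ | ⟨a', h1, h2⟩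
      · exact absurd (hinj h1) (by simp [h12, h13, h14, h23, h24, h34, Ne.symm h12, Ne.symm h13, Ne.symm h14, Ne.symm h23, Ne.symm h24, Ne.symm h34])
      · exact absurd (hinj h1) (by simp [h12, h13, h14, h23, h24, h34, Ne.symm h12, Ne.symm h13, Ne.symm h14, Ne.symm h23, Ne.symm h24, Ne.symm h34])
      · exact absurd (hinj h1) (by simp [h12, h13, h14, h23, h24, h34, Ne.symm h12, Ne.symm h13, Ne.symm h14, Ne.symm h23, Ne.symm h24, Ne.symm h34])
      · exact absurd (hinj h1) (by simp [h12, h13, h14, h23, h24, h34, Ne.symm h12, Ne.symm h13, Ne.symm h14, Ne.symm h23, Ne.symm h24, Ne.symm h34])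
      · exact absurd (hinj h1) (by simp [h12, h13, h14, h23, h24, h34, Ne.symm h12, Ne.symm h13, Ne.symm h14, Ne.symm h23, Ne.symm h24, Ne.symm h34])
      · have h3 : code [t2] = e' ∧ a = a' ∧ b = b' := by simpa using hinj h1
        obtain ⟨rfl, rfl, rfl⟩ := h3
        rcases newApp_inv SA.pas code t1 t2 t3 t4 h2 with ⟨g1, g2⟩ | ⟨a'', g1, g2⟩ |
            ⟨a'', b'', c'', x', y', g1, g2, g3, g4, g5⟩ | ⟨e'', g1, g2⟩ |
            ⟨e'', a'', g1, g2⟩ | ⟨e'', a'', b'', g1, g2⟩ | ⟨g1, g2⟩ | ⟨a'', g1, g2⟩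
        · exact absurd (hinj g1) (by simp [h12, h13, h14, h23, h24, h34, Ne.symm h12, Ne.symm h13, Ne.symm h14, Ne.symm h23, Ne.symm h24, Ne.symm h34])
        · exact absurd (hinj g1) (by simp [h12, h13, h14, h23, h24, h34, Ne.symm h12, Ne.symm h13, Ne.symm h14, Ne.symm h23, Ne.symm h24, Ne.symm h34])
        · have g6 : a = a'' ∧ b = b'' ∧ c = c'' := by simpa using hinj g2
          obtain ⟨rfl, rfl, rfl⟩ := g6
          exact ⟨x', g3, y', g4, g5⟩
        · exact absurd (hinj g1) (by simp [h12, h13, h14, h23, h24, h34, Ne.symm h12, Ne.symm h13, Ne.symm h14, Ne.symm h23, Ne.symm h24, Ne.symm h34])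
        · exact absurd (hinj g1) (by simp [h12, h13, h14, h23, h24, h34, Ne.symm h12, Ne.symm h13, Ne.symm h14, Ne.symm h23, Ne.symm h24, Ne.symm h34])
        · exact absurd (hinj g1) (by simp [h12, h13, h14, h23, h24, h34, Ne.symm h12, Ne.symm h13, Ne.symm h14, Ne.symm h23, Ne.symm h24, Ne.symm h34])
        · exact absurd (hinj g1) (by simp [h12, h13, h14, h23, h24, h34, Ne.symm h12, Ne.symm h13, Ne.symm h14, Ne.symm h23, Ne.symm h24, Ne.symm h34])
        · exact absurd (hinj g1) (by simp [h12, h13, h14, h23, h24, h34, Ne.symm h12, Ne.symm h13, Ne.symm h14, Ne.symm h23, Ne.symm h24, Ne.symm h34])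
      · exact absurd (hinj h1) (by simp [h12, h13, h14, h23, h24, h34, Ne.symm h12, Ne.symm h13, Ne.symm h14, Ne.symm h23, Ne.symm h24, Ne.symm h34])
      · exact absurd (hinj h1) (by simp [h12, h13, h14, h23, h24, h34, Ne.symm h12, Ne.symm h13, Ne.symm h14, Ne.symm h23, Ne.symm h24, Ne.symm h34])
    · rintro ⟨x, hx, y, hy, hz⟩
      exact NewApp.c3 _ _ _ _ _ (NewApp.scomb _ _ _ _ _ _ hx hy hz)
end

section
/- For a pca A and a partial functional F: A^A → A, the family of partial functions (f_α) indexed by ordinals, defined by f₀ = ∅, f_{α+1}(a) = b whenever there exists g ∈ Tot_{A[f_α]} with a ∈ I₁^{A[f_α]}(g) and F(g) = b, and f_λ = ⋃_{α<λ} f_α at limits, is a compatible family: α ≤ β implies f_α ⊆ f_β (as partial functions). -/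
theorem OrApp_mono {A : Type} (S : PCA A) (D : OracleData S) {f f' : A → A → Prop}
    (hff : ∀ a b, f a b → f' a b) {a b c : A} (h : OrApp S D f a b c) :
    OrApp S D f' a b c := by
  obtain ⟨u, hu, x, hx1, hx2⟩ := h
  refine ⟨u, fun i hi => ?_, x, hx1, hx2⟩
  obtain ⟨v, y, h1, h2, h3⟩ := hu i hi
  exact ⟨v, y, h1, h2, hff _ _ h3⟩

theorem stage_zero {A : Type} (S : PCA A) (D : OracleData S) (F : (A → A) → Part A) :
    stage S D F 0 = fun _ _ => False := Ordinal.limitRecOn_zero ..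

theorem stage_succ {A : Type} (S : PCA A) (D : OracleData S) (F : (A → A) → Part A)
    (o : Ordinal.{0}) :
    stage S D F (Order.succ o) =
      fun a b => ∃ g : A → A, b ∈ F g ∧ ∀ x, OrApp S D (stage S D F o) a x (g x) :=
  Ordinal.limitRecOn_succ ..

theorem stage_limit {A : Type} (S : PCA A) (D : OracleData S) (F : (A → A) → Part A)
    (o : Ordinal.{0}) (ho : Order.IsSuccLimit o) :
    stage S D F o = fun a b => ∃ β : Ordinal.{0}, ∃ _ : β < o, stage S D F β a b :=
  Ordinal.limitRecOn_limit _ _ _ _ ho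

theorem stage_lt_mono {A : Type} (S : PCA A) (D : OracleData S)
    (F : (A → A) → Part A) : ∀ β : Ordinal.{0}, ∀ α < β,
    ∀ a b : A, stage S D F α a b → stage S D F β a b := by
  intro β
  induction β using Ordinal.induction with
  | h β IH =>
    intro α hαβ a b hab
    rcases Ordinal.zero_or_succ_or_isSuccLimit β with h0 | ⟨γ, hγ⟩ | hlim
    · exact absurd hαβ (by simp [h0])
    · subst hγ
      rw [stage_succ]
      -- reduce to: stage γ a b → goal
      have key : ∀ a b, stage S D F γ a b →
          ∃ g : A → A, b ∈ F g ∧ ∀ x, OrApp S D (stage S D F γ) a x (g x) := by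
        intro a b hab
        rcases Ordinal.zero_or_succ_or_isSuccLimit γ with h0 | ⟨δ, hδ⟩ | hlim
        · subst h0; rw [stage_zero] at hab; exact hab.elim
        · subst hδ
          rw [stage_succ] at hab
          obtain ⟨g, hg, hor⟩ := hab
          refine ⟨g, hg, fun x => OrApp_mono S D ?_ (hor x)⟩
          exact IH _ (Order.lt_succ _) _ (Order.lt_succ _)
        · rw [stage_limit S D F γ hlim] at hab
          obtain ⟨δ, hδ, hab⟩ := hab
          have h1 : stage S D F (Order.succ δ) a b :=
            IH _ (lt_trans (hlim.succ_lt hδ) (Order.lt_succ γ)) _ (Order.lt_succ _) a b hab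
          rw [stage_succ] at h1
          obtain ⟨g, hg, hor⟩ := h1
          refine ⟨g, hg, fun x => OrApp_mono S D ?_ (hor x)⟩
          exact IH γ (Order.lt_succ _) δ hδ
      rcases lt_or_eq_of_le (Order.lt_succ_iff.mp hαβ) with h | h
      · exact key a b (IH γ (Order.lt_succ _) α h a b hab)
      · exact key a b (h ▸ hab)
    · rw [stage_limit S D F β hlim]
      exact ⟨α, hαβ, hab⟩

/-- the stagewise family `(f_α)` used to construct `A[F]` is
compatible: `α ≤ β` implies `f_α ⊆ f_β` (as partial functions / graphs). -/
theorem stage_monotone {A : Type} (S : PCA A) (D : OracleData S)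
    (F : (A → A) → Part A) (α β : Ordinal.{0}) (h : α ≤ β) :
    ∀ a b : A, stage S D F α a b → stage S D F β a b := by
  rcases lt_or_eq_of_le h with h | h
  · exact stage_lt_mono S D F β α h
  · exact h ▸ fun a b hab => hab
end

section
/- If J is a local operator on a pca A and one defines J′(P) = ⋃_{Q ⊆ P} J(Q), then J′ is a local operator, J′ preserves inclusions (P ⊆ P′ implies J′(P) ⊆ J′(P′)), and J′ ≅ J. -/
/-- A local operator on a pca. -/
def IsLocalOp {A : Type} (S : PAS A) (J : Set A → Set A) : Prop :=
  (∃ e1 : A, ∀ P : Set A, e1 ∈ arrowSet S P (J P)) ∧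
  (∃ e2 : A, ∀ P : Set A, e2 ∈ arrowSet S (J (J P)) (J P)) ∧
  (∃ e3 : A, ∀ P Q : Set A, e3 ∈ arrowSet S (arrowSet S P Q) (arrowSet S (J P) (J Q)))

/-- The preorder on local operators. -/
def opLE {A : Type} (S : PAS A) (J J' : Set A → Set A) : Prop :=
  ∃ e : A, ∀ P : Set A, e ∈ arrowSet S (J P) (J' P)


lemma kconst {A : Type} (S : PCA A) (a : A) :
    ∃ ka : A, ka ∈ S.pas.app S.k a ∧ ∀ b, S.pas.app ka b = Part.some a := by
  have h := S.k_spec a a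
  have hmem : a ∈ S.pas.app2 S.k a a := by rw [h]; exact Part.mem_some a
  obtain ⟨ka, hka, _⟩ := Part.mem_bind_iff.1 hmem
  refine ⟨ka, hka, fun b => ?_⟩
  have h2 := S.k_spec a b
  have hmem2 : a ∈ S.pas.app2 S.k a b := by rw [h2]; exact Part.mem_some a
  obtain ⟨ka', hka', hv⟩ := Part.mem_bind_iff.1 hmem2
  rw [Part.mem_unique hka' hka] at hv
  exact Part.eq_some_iff.2 hv

lemma ident {A : Type} (S : PCA A) :
    ∃ i : A, ∀ a, S.pas.app i a = Part.some a := by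
  have hd := S.s_def S.k S.k
  refine ⟨(S.pas.app2 S.s S.k S.k).get hd, fun a => ?_⟩
  obtain ⟨ka, hka, hkb⟩ := kconst S a
  have hv : a ∈ ((S.pas.app S.k a).bind fun x => (S.pas.app S.k a).bind fun y => S.pas.app x y) := by
    refine Part.mem_bind_iff.2 ⟨ka, hka, Part.mem_bind_iff.2 ⟨ka, hka, ?_⟩⟩
    rw [hkb ka]; exact Part.mem_some a
  have h3 := S.s_spec S.k S.k a a hv
  unfold PAS.app3 at h3
  obtain ⟨x, hx, hv2⟩ := Part.mem_bind_iff.1 h3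
  have : x = (S.pas.app2 S.s S.k S.k).get hd := Part.get_eq_of_mem hx hd ▸ rfl
  · rw [← this]; exact Part.eq_some_iff.2 hv2

lemma compc {A : Type} (S : PCA A) (f g : A) :
    ∃ c : A, ∀ x v, (∃ y ∈ S.pas.app g x, v ∈ S.pas.app f y) → S.pas.app c x = Part.some v := by
  obtain ⟨kf, hkf, hkfb⟩ := kconst S f
  have hd := S.s_def kf g
  refine ⟨(S.pas.app2 S.s kf g).get hd, fun x v ⟨y, hy, hv⟩ => ?_⟩
  have hmem : v ∈ ((S.pas.app kf x).bind fun p => (S.pas.app g x).bind fun y => S.pas.app p y) := by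
    rw [hkfb x]
    exact Part.mem_bind_iff.2 ⟨f, Part.mem_some f, Part.mem_bind_iff.2 ⟨y, hy, hv⟩⟩
  have h3 := S.s_spec kf g x v hmem
  unfold PAS.app3 at h3
  obtain ⟨z, hz, hv2⟩ := Part.mem_bind_iff.1 h3
  have hzeq : z = (S.pas.app2 S.s kf g).get hd := Part.get_eq_of_mem hz hd ▸ rfl
  rw [← hzeq]; exact Part.eq_some_iff.2 hv2


/-- `J' P := ⋃_{Q ⊆ P} J Q` is a local operator, preserves
inclusions, and is isomorphic to `J`. -/
theorem localOp_monotone_replacement {A : Type} (S : PCA A) (J : Set A → Set A)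
    (hJ : IsLocalOp S.pas J) :
    IsLocalOp S.pas (fun P => {a | ∃ Q ⊆ P, a ∈ J Q}) ∧
    (∀ P P' : Set A, P ⊆ P' →
      {a | ∃ Q ⊆ P, a ∈ J Q} ⊆ {a | ∃ Q ⊆ P', a ∈ J Q}) ∧
    opLE S.pas J (fun P => {a | ∃ Q ⊆ P, a ∈ J Q}) ∧
    opLE S.pas (fun P => {a | ∃ Q ⊆ P, a ∈ J Q}) J := by
  obtain ⟨⟨e1, he1⟩, ⟨e2, he2⟩, ⟨e3, he3⟩⟩ := hJ
  obtain ⟨i, hi⟩ := ident S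
  -- i ∈ arrowSet Q P whenever Q ⊆ P
  have hiarr : ∀ Q P : Set A, Q ⊆ P → i ∈ arrowSet S.pas Q P := by
    intro Q P hQP b hb
    rw [hi b]
    exact ⟨trivial, fun c hc => (Part.mem_some_iff.1 hc) ▸ hQP hb⟩
  -- t := value of e3 · i ; t ∈ arrowSet (J Q) (J P) whenever Q ⊆ P
  have hdom_t : (S.pas.app e3 i).Dom :=
    ((he3 ∅ ∅) i (hiarr ∅ ∅ subset_rfl)).1
  set t := (S.pas.app e3 i).get hdom_t with ht_def
  have htmem : t ∈ S.pas.app e3 i := Part.get_mem hdom_t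
  have ht : ∀ Q P : Set A, Q ⊆ P → t ∈ arrowSet S.pas (J Q) (J P) := by
    intro Q P hQP
    exact ((he3 Q P) i (hiarr Q P hQP)).2 t htmem
  -- t2 := value of e3 · t ; fix J' P := {a | ∃ Q ⊆ P, a ∈ J Q}
  set J' : Set A → Set A := fun P => {a | ∃ Q ⊆ P, a ∈ J Q} with hJ'
  -- for any Q ⊆ J' P, t ∈ arrowSet Q (J P)
  have htQ : ∀ (P Q : Set A), Q ⊆ J' P → t ∈ arrowSet S.pas Q (J P) := by
    intro P Q hQ b hb
    obtain ⟨R, hRP, hbR⟩ := hQ hb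
    exact ht R P hRP b hbR
  have hdom_t2 : (S.pas.app e3 t).Dom :=
    ((he3 ∅ (J ∅)) t (htQ ∅ ∅ (by intro x hx; exact absurd hx (Set.notMem_empty x)))).1
  set t2 := (S.pas.app e3 t).get hdom_t2 with ht2_def
  have ht2mem : t2 ∈ S.pas.app e3 t := Part.get_mem hdom_t2
  have ht2 : ∀ P Q : Set A, Q ⊆ J' P → t2 ∈ arrowSet S.pas (J Q) (J (J P)) := by
    intro P Q hQ
    exact ((he3 Q (J P)) t (htQ P Q hQ)).2 t2 ht2mem
  obtain ⟨e2', he2'⟩ := compc S e2 t2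
  refine ⟨⟨⟨e1, ?_⟩, ⟨e2', ?_⟩, ⟨e3, ?_⟩⟩, ?_, ⟨i, ?_⟩, ⟨t, ?_⟩⟩
  · -- e1
    intro P b hb
    obtain ⟨hd, hv⟩ := he1 P b hb
    exact ⟨hd, fun c hc => ⟨P, subset_rfl, hv c hc⟩⟩
  · -- e2'
    intro P a ha
    obtain ⟨Q, hQ, haJQ⟩ := ha
    obtain ⟨hd2, hv2⟩ := ht2 P Q hQ a haJQ
    set y := (S.pas.app t2 a).get hd2 with hy_def
    have hyJJ : y ∈ J (J P) := hv2 y (Part.get_mem hd2)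
    obtain ⟨hd3, hv3⟩ := he2 P y hyJJ
    set v := (S.pas.app e2 y).get hd3 with hv_def
    have hvJ : v ∈ J P := hv3 v (Part.get_mem hd3)
    have := he2' a v ⟨y, Part.get_mem hd2, Part.get_mem hd3⟩
    rw [this]
    exact ⟨trivial, fun c hc => (Part.mem_some_iff.1 hc) ▸ ⟨P, subset_rfl, hvJ⟩⟩
  · -- e3
    intro P Q r hr
    obtain ⟨hd, hv⟩ := he3 P Q r hr
    refine ⟨hd, fun c hc a ha => ?_⟩
    obtain ⟨R, hRP, haJR⟩ := ha
    have hrR : r ∈ arrowSet S.pas R Q := fun b hb => hr b (hRP hb)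
    obtain ⟨hd', hv'⟩ := (he3 R Q r hrR).2 c hc a haJR
    exact ⟨hd', fun d hd'' => ⟨Q, subset_rfl, hv' d hd''⟩⟩
  · -- monotone
    intro P P' hPP' a ⟨Q, hQ, haJQ⟩
    exact ⟨Q, hQ.trans hPP', haJQ⟩
  · -- J ≤ J'
    intro P a ha
    rw [hi a]
    exact ⟨trivial, fun c hc => (Part.mem_some_iff.1 hc) ▸ ⟨P, subset_rfl, ha⟩⟩
  · -- J' ≤ J
    intro P a ⟨Q, hQ, haJQ⟩
    exact ht Q P hQ a haJQ
end

section
/- For distinct natural numbers n ≠ m, J{n} ∩ J{m} = ∅, where J is Pitts' local operator on K₁. -/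
/-- Kleene's first model as a partial applicative structure. -/
def K1pas : PAS ℕ :=
  ⟨fun n m => Nat.Partrec.Code.eval (Denumerable.ofNat Nat.Partrec.Code n) m⟩

/-- Pitts' local operator on `K₁`. -/
def pittsJ (P : Set ℕ) : Set ℕ :=
  ⋂₀ {Q : Set ℕ | (∀ p ∈ P, Nat.pair 0 p ∈ Q) ∧
      (∀ n e : ℕ, e ∈ arrowSet K1pas {m | n ≤ m} Q → Nat.pair 1 e ∈ Q)}


lemma mem_pittsJ_iff {P : Set ℕ} {a : ℕ} :
    a ∈ pittsJ P ↔ ∀ Q : Set ℕ, ((∀ p ∈ P, Nat.pair 0 p ∈ Q) ∧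
      (∀ k e : ℕ, e ∈ arrowSet K1pas {x | k ≤ x} Q → Nat.pair 1 e ∈ Q)) → a ∈ Q := by
  simp only [pittsJ, Set.mem_sInter, Set.mem_setOf_eq]

lemma pittsJ_subset_compl {n m : ℕ} (h : n ≠ m) :
    pittsJ {n} ⊆ (pittsJ {m})ᶜ := by
  intro a ha
  refine mem_pittsJ_iff.mp ha (pittsJ {m})ᶜ ⟨?_, ?_⟩
  · -- base case: ⟨0,n⟩ ∉ pittsJ {m}
    rintro p rfl hmem
    have := mem_pittsJ_iff.mp hmem {x | x ≠ Nat.pair 0 p} ⟨?_, ?_⟩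
    · exact this rfl
    · rintro q rfl
      simp only [Set.mem_setOf_eq, ne_eq, Nat.pair_eq_pair]
      rintro ⟨-, rfl⟩; exact h rfl
    · intro k e _
      simp only [Set.mem_setOf_eq, ne_eq, Nat.pair_eq_pair]
      rintro ⟨h10, -⟩; exact one_ne_zero h10
  · -- step case
    intro k e he hmem
    -- he : e ∈ arrowSet K1pas {x | k ≤ x} (pittsJ {m})ᶜ
    -- hmem : ⟨1,e⟩ ∈ pittsJ {m}
    have key := mem_pittsJ_iff.mp hmem (pittsJ {m} \ {Nat.pair 1 e}) ⟨?_, ?_⟩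
    · exact key.2 rfl
    · rintro q rfl
      constructor
      · exact mem_pittsJ_iff.mpr (fun Q hQ => hQ.1 q rfl)
      · simp only [Set.mem_singleton_iff, Nat.pair_eq_pair]
        rintro ⟨h01, -⟩; exact zero_ne_one h01
    · intro k' e' he'
      constructor
      · refine mem_pittsJ_iff.mpr (fun Q hQ => hQ.2 k' e' ?_)
        intro b hb
        obtain ⟨hd, hv⟩ := he' b hb
        exact ⟨hd, fun c hc => (mem_pittsJ_iff.mp (hv c hc).1) Q hQ⟩
      · simp only [Set.mem_singleton_iff, Nat.pair_eq_pair]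
        rintro ⟨-, rfl⟩
        -- e' = e : contradiction using x = max k k'
        set x := max k k' with hx
        obtain ⟨hd1, hv1⟩ := he x (le_max_left k k')
        obtain ⟨hd2, hv2⟩ := he' x (le_max_right k k')
        have hc : (K1pas.app e' x).get hd1 ∈ K1pas.app e' x := Part.get_mem hd1
        have h1 := hv1 _ hc
        have h2 := hv2 _ hc
        exact h1 h2.1

/-- for `n ≠ m`, `J{n} ∩ J{m} = ∅` for Pitts' local operator. -/
theorem pittsJ_disjoint {n m : ℕ} (h : n ≠ m) :
    pittsJ {n} ∩ pittsJ {m} = ∅ := by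
  rw [Set.eq_empty_iff_forall_notMem]
  rintro a ⟨h1, h2⟩
  exact pittsJ_subset_compl h h1 h2
end
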